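/- Let Υ : M̂ → M be a connected covering space of a connected noncompact manifold M, let E be an end of M̂ (a connected component with noncompact closure of the complement of a compact set, with compact boundary ∂E), and suppose E₀ := Υ(E) ≠ M. Then the restriction Υ|_{cl(E)} : cl(E) → cl(E₀) is a proper surjective map, ∂E₀ = Υ(∂E) \ E₀ is compact, and E₀ is an end of M. -/

import Mathlib

open Set Topology

section Sheets

variable {Mhat M : Type} [TopologicalSpace M] [TopologicalSpace Mhat] {Υ : Mhat → M}

/-- A connected set avoiding the frontier of an open set `E` and meeting `E` lies in `E`. -/
lemma stmt17_dichotomy {E S : Set Mhat} (hEo : IsOpen E) (hS : IsPreconnected S)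
    (hdisj : S ∩ frontier E = ∅) (hmeet : (S ∩ E).Nonempty) : S ⊆ E := by
  apply hS.subset_left_of_subset_union hEo isClosed_closure.isOpen_compl
    (disjoint_compl_right.mono_left subset_closure) ?_ hmeet
  intro z hz
  by_cases h : z ∈ closure E
  · left
    by_contra hzE
    exact (eq_empty_iff_forall_notMem.1 hdisj z)
      ⟨hz, by rw [hEo.frontier_eq]; exact ⟨h, hzE⟩⟩
  · exact Or.inr h

/-- Sheet data over a neighborhood of `y` inside `G`, adapted to a compact set `Efr`. -/
structure SheetData (Υ : Mhat → M) (Efr : Set Mhat) (y : M) (G : Set M) where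
  U2 : Set M
  U3 : Set M
  ι : Type
  W : ι → Set Mhat
  mem3 : y ∈ U3
  open3 : IsOpen U3
  open2 : IsOpen U2
  cl3sub : closure U3 ⊆ U2
  sub2 : U2 ⊆ G
  disj : ∀ i j, i ≠ j → Disjoint (W i) (W j)
  cover : Υ ⁻¹' U2 = ⋃ i, W i
  conn : ∀ i, IsPreconnected (W i)
  opn : ∀ i, IsOpen (W i)
  img : ∀ i, Υ '' W i = U2
  inj : ∀ i, Set.InjOn Υ (W i)
  cpt : ∀ i, IsCompact (W i ∩ Υ ⁻¹' closure U3)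
  finJ : {i | (W i ∩ Efr).Nonempty}.Finite

lemma SheetData.mem2 {Efr : Set Mhat} {y : M} {G : Set M} (d : SheetData Υ Efr y G) :
    y ∈ d.U2 := d.cl3sub (subset_closure d.mem3)

lemma exists_sheetData [T2Space M] [LocallyCompactSpace M] [LocallyConnectedSpace M]
    (hcov : IsCoveringMap Υ) {Efr : Set Mhat} (hfr : IsCompact Efr)
    (y : M) {G : Set M} (hG : IsOpen G) (hyG : y ∈ G) :
    Nonempty (SheetData Υ Efr y G) := by
  obtain ⟨hdisc, U0, hyU0, hU0o, -, H, -⟩ := hcov y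
  rcases isEmpty_or_nonempty ↥(Υ ⁻¹' {y}) with hemp | hnemp
  · have hpre : Υ ⁻¹' U0 = ∅ :=
      eq_empty_of_forall_notMem fun z hz => (IsEmpty.false (H ⟨z, hz⟩).2).elim
    obtain ⟨K₁, hK₁mem, hK₁sub, hK₁cpt⟩ :=
      local_compact_nhds ((hU0o.inter hG).mem_nhds ⟨hyU0, hyG⟩)
    constructor
    exact
    { U2 := U0 ∩ G, U3 := interior K₁, ι := ↥(Υ ⁻¹' {y}), W := (fun _ => ∅),
      mem3 := mem_interior_iff_mem_nhds.2 hK₁mem, open3 := isOpen_interior,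
      open2 := hU0o.inter hG,
      cl3sub := (closure_minimal interior_subset hK₁cpt.isClosed).trans hK₁sub,
      sub2 := inter_subset_right,
      disj := (fun _ _ _ => disjoint_bot_left),
      cover := by rw [iUnion_empty, preimage_inter, hpre, empty_inter],
      conn := (fun _ => isPreconnected_empty), opn := (fun _ => isOpen_empty),
      img := (fun i => (IsEmpty.false i).elim), inj := (fun _ => injOn_empty _),
      cpt := (fun i => (IsEmpty.false i).elim),
      finJ := Set.finite_empty.subset (fun i _ => (IsEmpty.false i).elim) }
  obtain ⟨t, hyt⟩ : ∃ t : Bundle.Trivialization (↥(Υ ⁻¹' {y})) Υ, y ∈ t.baseSet :=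
    ⟨_, (hcov y).mem_toTrivialization_baseSet⟩
  haveI := hdisc
  set B : Set M := t.baseSet ∩ G with hB
  have hBo : IsOpen B := t.open_baseSet.inter hG
  have hyB : y ∈ B := ⟨hyt, hyG⟩
  obtain ⟨K₁, hK₁mem, hK₁sub, hK₁cpt⟩ := local_compact_nhds (hBo.mem_nhds hyB)
  set U2 : Set M := connectedComponentIn (interior K₁) y with hU2
  have hyK₁ : y ∈ interior K₁ := mem_interior_iff_mem_nhds.2 hK₁mem
  have hU2o : IsOpen U2 := isOpen_interior.connectedComponentIn
  have hyU2 : y ∈ U2 := mem_connectedComponentIn hyK₁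
  have hU2K₁ : U2 ⊆ K₁ := (connectedComponentIn_subset _ _).trans interior_subset
  have hclU2K₁ : closure U2 ⊆ K₁ := by
    rw [← hK₁cpt.isClosed.closure_eq]; exact closure_mono hU2K₁
  have hU2B : U2 ⊆ B := hU2K₁.trans hK₁sub
  have hclU2B : closure U2 ⊆ B := hclU2K₁.trans hK₁sub
  obtain ⟨K₂, hK₂mem, hK₂sub, hK₂cpt⟩ := local_compact_nhds (hU2o.mem_nhds hyU2)
  set U3 : Set M := interior K₂ with hU3
  have hyU3 : y ∈ U3 := mem_interior_iff_mem_nhds.2 hK₂mem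
  have hclU3 : closure U3 ⊆ U2 := by
    refine subset_trans ?_ hK₂sub
    rw [← hK₂cpt.isClosed.closure_eq]; exact closure_mono interior_subset
  -- sheets
  set sm : M × ↥(Υ ⁻¹' {y}) → Mhat := ⇑t.toOpenPartialHomeomorph.symm with hsm
  set W : ↥(Υ ⁻¹' {y}) → Set Mhat := fun i => (fun u => sm (u, i)) '' U2 with hW
  -- basic facts
  have htar : ∀ {u : M} (i : ↥(Υ ⁻¹' {y})), u ∈ B → (u, i) ∈ t.target := by
    intro u i hu; exact t.mem_target.2 hu.1
  have hproj : ∀ {u : M} (i : ↥(Υ ⁻¹' {y})), u ∈ B → Υ (sm (u, i)) = u := by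
    intro u i hu; exact t.proj_symm_apply (htar i hu)
  have happly : ∀ {u : M} (i : ↥(Υ ⁻¹' {y})), u ∈ B → t (sm (u, i)) = (u, i) := by
    intro u i hu; exact t.apply_symm_apply (htar i hu)
  have hsrc : ∀ {u : M} (i : ↥(Υ ⁻¹' {y})), u ∈ B → sm (u, i) ∈ t.source := by
    intro u i hu; exact t.map_target (htar i hu)
  -- characterization of membership in W i
  have hWmem : ∀ (i : ↥(Υ ⁻¹' {y})) (z : Mhat),
      z ∈ W i ↔ Υ z ∈ U2 ∧ z ∈ t.source ∧ (t z).2 = i := by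
    intro i z
    constructor
    · rintro ⟨u, hu, rfl⟩
      have huB : u ∈ B := hU2B hu
      refine ⟨by rw [hproj i huB]; exact hu, hsrc i huB, by rw [happly i huB]⟩
    · rintro ⟨h1, h2, h3⟩
      refine ⟨Υ z, h1, ?_⟩
      have : sm (Υ z, (t z).2) = z := t.symm_apply_mk_proj h2
      rw [← h3]; exact this
  constructor
  refine
  { U2 := U2, U3 := U3, ι := ↥(Υ ⁻¹' {y}), W := W
    mem3 := hyU3, open3 := isOpen_interior, open2 := hU2o, cl3sub := hclU3
    sub2 := fun u hu => (hU2B hu).2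
    disj := ?_, cover := ?_, conn := ?_, opn := ?_, img := ?_, inj := ?_
    cpt := ?_, finJ := ?_ }
  · -- disjoint
    intro i j hij
    rw [Set.disjoint_left]
    intro z hzi hzj
    rw [hWmem i z] at hzi; rw [hWmem j z] at hzj
    exact hij (hzi.2.2 ▸ hzj.2.2 ▸ rfl)
  · -- cover
    apply Set.Subset.antisymm
    · intro z hz
      have hzB : Υ z ∈ B := hU2B hz
      have hzsrc : z ∈ t.source := t.mem_source.2 hzB.1
      exact mem_iUnion.2 ⟨(t z).2, (hWmem _ z).2 ⟨hz, hzsrc, rfl⟩⟩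
    · intro z hz
      obtain ⟨i, hi⟩ := mem_iUnion.1 hz
      exact ((hWmem i z).1 hi).1
  · -- preconnected
    intro i
    apply IsPreconnected.image isPreconnected_connectedComponentIn
    apply t.toOpenPartialHomeomorph.continuousOn_symm.comp (Continuous.continuousOn (by continuity))
    intro u hu; exact htar i (hU2B hu)
  · -- open
    intro i
    have : W i = Υ ⁻¹' U2 ∩ (t.source ∩ ⇑t ⁻¹' (univ ×ˢ ({i} : Set ↥(Υ ⁻¹' {y})))) := by
      ext z
      rw [hWmem i z]
      simp only [Set.mem_inter_iff, Set.mem_preimage, Set.mem_prod, Set.mem_univ, true_and,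
        Set.mem_singleton_iff]
      try tauto
    rw [this]
    exact (hU2o.preimage hcov.continuous).inter
      (t.toOpenPartialHomeomorph.continuousOn.isOpen_inter_preimage t.open_source
        (isOpen_univ.prod (isOpen_discrete _)))
  · -- image
    intro i
    apply Set.Subset.antisymm
    · rintro u ⟨z, hz, rfl⟩; exact ((hWmem i z).1 hz).1
    · intro u hu
      exact ⟨sm (u, i), ⟨u, hu, rfl⟩, hproj i (hU2B hu)⟩
  · -- injOn
    intro i z hz z' hz' hzz'
    rw [hWmem i z] at hz; rw [hWmem i z'] at hz'
    have h1 : sm (Υ z, (t z).2) = z := t.symm_apply_mk_proj hz.2.1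
    have h2 : sm (Υ z', (t z').2) = z' := t.symm_apply_mk_proj hz'.2.1
    rw [← h1, ← h2, hz.2.2, hz'.2.2, hzz']
  · -- compact
    intro i
    have heq : W i ∩ Υ ⁻¹' closure U3 = (fun u => sm (u, i)) '' closure U3 := by
      ext z
      constructor
      · rintro ⟨hzW, hz3⟩
        rw [hWmem i z] at hzW
        refine ⟨Υ z, hz3, ?_⟩
        have : sm (Υ z, (t z).2) = z := t.symm_apply_mk_proj hzW.2.1
        rw [← hzW.2.2]; exact this
      · rintro ⟨u, hu, rfl⟩
        have huU2 : u ∈ U2 := hclU3 hu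
        refine ⟨⟨u, huU2, rfl⟩, ?_⟩
        rw [Set.mem_preimage, hproj i (hU2B huU2)]; exact hu
    rw [heq]
    have hc3 : IsCompact (closure U3) :=
      hK₂cpt.of_isClosed_subset isClosed_closure
        (by rw [← hK₂cpt.isClosed.closure_eq]; exact closure_mono interior_subset)
    apply hc3.image_of_continuousOn
    apply t.toOpenPartialHomeomorph.continuousOn_symm.comp (Continuous.continuousOn (by continuity))
    intro u hu; exact htar i (hU2B (hclU3 hu))
  · -- finiteness of frontier-meeting sheets
    set bigV : ↥(Υ ⁻¹' {y}) → Set Mhat :=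
      fun i => t.source ∩ ⇑t ⁻¹' (univ ×ˢ ({i} : Set ↥(Υ ⁻¹' {y}))) with hbigV
    have hbigVo : ∀ i, IsOpen (bigV i) :=
      fun i => t.toOpenPartialHomeomorph.continuousOn.isOpen_inter_preimage t.open_source
        (isOpen_univ.prod (isOpen_discrete _))
    set Kc : Set Mhat := Efr ∩ Υ ⁻¹' closure U2 with hKc
    have hKcc : IsCompact Kc :=
      hfr.inter_right (isClosed_closure.preimage hcov.continuous)
    have hKcsub : Kc ⊆ ⋃ i, bigV i := by
      intro z hz
      have hzB : Υ z ∈ B := hclU2B hz.2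
      have hzsrc : z ∈ t.source := t.mem_source.2 hzB.1
      refine mem_iUnion.2 ⟨(t z).2, hzsrc, ?_⟩
      simp [hbigV]
    obtain ⟨s, hs⟩ := hKcc.elim_finite_subcover bigV hbigVo hKcsub
    apply s.finite_toSet.subset
    rintro i ⟨z, hzW, hzE⟩
    have hm := (hWmem i z).1 hzW
    have hzKc : z ∈ Kc := ⟨hzE, mem_preimage.2 (subset_closure hm.1)⟩
    obtain ⟨j, hjs, hzj⟩ := mem_iUnion₂.1 (hs hzKc)
    have h2j : (t z).2 = j := by
      have h := hzj.2
      rw [Set.mem_preimage, Set.mem_prod] at h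
      exact h.2
    have : i = j := by rw [← hm.2.2, h2j]
    rw [this]; exact hjs

end Sheets

section Consumers

variable {Mhat M : Type} [TopologicalSpace M] [TopologicalSpace Mhat] {Υ : Mhat → M}
variable {E : Set Mhat} {y : M} {G : Set M}

lemma SheetData.sheet_subset (d : SheetData Υ (frontier E) y G) (hEo : IsOpen E)
    {i : d.ι} (hfr : ¬ (d.W i ∩ frontier E).Nonempty) (hcl : (d.W i ∩ closure E).Nonempty) :
    d.W i ⊆ E := by
  obtain ⟨z, hzW, hzcl⟩ := hcl
  have hmeet : (d.W i ∩ E).Nonempty := by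
    obtain ⟨w, hw1, hw2⟩ := mem_closure_iff.1 hzcl (d.W i) (d.opn i) hzW
    exact ⟨w, hw1, hw2⟩
  exact stmt17_dichotomy hEo (d.conn i) (not_nonempty_iff_eq_empty.1 hfr) hmeet

lemma SheetData.finite_iff (d : SheetData Υ (frontier E) y G) (hEo : IsOpen E)
    {y' : M} (hy' : y' ∈ d.U2) :
    (E ∩ Υ ⁻¹' {y'}).Finite ↔ {i : d.ι | d.W i ⊆ E}.Finite := by
  constructor
  · intro hfin
    have hpt : ∀ i : d.ι, ∃ z, z ∈ d.W i ∧ Υ z = y' := by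
      intro i
      have himg := d.img i
      rw [← himg] at hy'
      obtain ⟨z, hz, hz'⟩ := hy'
      exact ⟨z, hz, hz'⟩
    choose pt hpt1 hpt2 using hpt
    apply Set.Finite.of_finite_image (f := pt)
    · apply hfin.subset
      rintro _ ⟨i, hi, rfl⟩
      exact ⟨hi (hpt1 i), by simp [hpt2 i]⟩
    · intro i _ j _ hij
      by_contra hne
      exact (Set.disjoint_left.1 (d.disj i j hne) (hpt1 i)) (hij ▸ hpt1 j)
  · intro hSfin
    have hsub : E ∩ Υ ⁻¹' {y'} ⊆
        ⋃ i ∈ ({i : d.ι | d.W i ⊆ E} ∪ {i | (d.W i ∩ frontier E).Nonempty}),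
          d.W i ∩ Υ ⁻¹' {y'} := by
      rintro z ⟨hzE, hzf⟩
      have hzf' : Υ z = y' := hzf
      have hzU2 : z ∈ Υ ⁻¹' d.U2 := by
        rw [Set.mem_preimage, hzf']; exact hy'
      rw [d.cover] at hzU2
      obtain ⟨i, hi⟩ := mem_iUnion.1 hzU2
      refine mem_biUnion ?_ ⟨hi, hzf⟩
      by_cases hJ : (d.W i ∩ frontier E).Nonempty
      · exact Or.inr hJ
      · exact Or.inl (d.sheet_subset hEo hJ ⟨z, hi, subset_closure hzE⟩)
    apply Set.Finite.subset ?_ hsub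
    apply Set.Finite.biUnion (hSfin.union d.finJ)
    intro i _
    apply Set.Subsingleton.finite
    intro a ha b hb
    refine d.inj i ha.1 hb.1 ?_
    have h1 : Υ a = y' := ha.2
    have h2 : Υ b = y' := hb.2
    rw [h1, h2]

lemma SheetData.isCompact_inter (d : SheetData Υ (frontier E) y G) (hcont : Continuous Υ)
    (hEo : IsOpen E) (hSfin : {i : d.ι | d.W i ⊆ E}.Finite) :
    IsCompact (closure E ∩ Υ ⁻¹' closure d.U3) := by
  have hsub : closure E ∩ Υ ⁻¹' closure d.U3 ⊆
      ⋃ i ∈ ({i : d.ι | d.W i ⊆ E} ∪ {i | (d.W i ∩ frontier E).Nonempty}),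
        d.W i ∩ Υ ⁻¹' closure d.U3 := by
    rintro z ⟨hzE, hz3⟩
    have hzU2 : z ∈ Υ ⁻¹' d.U2 := d.cl3sub hz3
    rw [d.cover] at hzU2
    obtain ⟨i, hi⟩ := mem_iUnion.1 hzU2
    refine mem_biUnion ?_ ⟨hi, hz3⟩
    by_cases hJ : (d.W i ∩ frontier E).Nonempty
    · exact Or.inr hJ
    · exact Or.inl (d.sheet_subset hEo hJ ⟨z, hi, hzE⟩)
  refine IsCompact.of_isClosed_subset ?_
    (isClosed_closure.inter (isClosed_closure.preimage hcont)) hsub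
  exact (hSfin.union d.finJ).isCompact_biUnion (fun i _ => d.cpt i)

end Consumers

theorem stmt_17 {n : ℕ} {Mhat M : Type} [TopologicalSpace M] [T2Space M]
    [ChartedSpace (EuclideanSpace ℝ (Fin n)) M] [ConnectedSpace M] [NoncompactSpace M]
    [TopologicalSpace Mhat] [T2Space Mhat]
    [ChartedSpace (EuclideanSpace ℝ (Fin n)) Mhat] [ConnectedSpace Mhat]
    {Υ : Mhat → M} (hcov : IsCoveringMap Υ)
    {E : Set Mhat}
    (hE : ∃ L : Set Mhat, IsCompact L ∧ (∃ x ∈ Lᶜ, E = connectedComponentIn Lᶜ x))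
    (hEnc : ¬ IsCompact (closure E))
    (hne : Υ '' E ≠ Set.univ) :
    (∀ C : Set M, C ⊆ closure (Υ '' E) → IsCompact C → IsCompact (closure E ∩ Υ ⁻¹' C)) ∧
    Υ '' closure E = closure (Υ '' E) ∧
    frontier (Υ '' E) = Υ '' frontier E \ Υ '' E ∧
    IsCompact (frontier (Υ '' E)) ∧
    (∃ K : Set M, IsCompact K ∧ (∃ y ∈ Kᶜ, Υ '' E = connectedComponentIn Kᶜ y) ∧
      ¬ IsCompact (closure (Υ '' E))) := by
  haveI : LocallyCompactSpace M :=
    ChartedSpace.locallyCompactSpace (H := EuclideanSpace ℝ (Fin n)) (M := M)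
  haveI : LocallyConnectedSpace M :=
    ChartedSpace.locallyConnectedSpace (H := EuclideanSpace ℝ (Fin n)) (M := M)
  haveI : LocallyConnectedSpace Mhat :=
    ChartedSpace.locallyConnectedSpace (H := EuclideanSpace ℝ (Fin n)) (M := Mhat)
  obtain ⟨L, hLcpt, x, hxL, hEdef⟩ := hE
  have hLco : IsOpen Lᶜ := hLcpt.isClosed.isOpen_compl
  have hEo : IsOpen E := hEdef ▸ hLco.connectedComponentIn
  have hxE : x ∈ E := hEdef ▸ mem_connectedComponentIn hxL
  have hEconn : IsPreconnected E := hEdef ▸ isPreconnected_connectedComponentIn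
  -- frontier E ⊆ L
  have hfrL : frontier E ⊆ L := by
    intro z hz
    by_contra hzL
    have hzLc : z ∈ Lᶜ := hzL
    have hzcl : z ∈ closure E := frontier_subset_closure hz
    set N : Set Mhat := connectedComponentIn Lᶜ z with hN
    have hNo : IsOpen N := hLco.connectedComponentIn
    have hzN : z ∈ N := mem_connectedComponentIn hzLc
    obtain ⟨w, hwN, hwE⟩ := mem_closure_iff.1 hzcl N hNo hzN
    have hNE : IsPreconnected (N ∪ E) :=
      IsPreconnected.union w hwN hwE isPreconnected_connectedComponentIn hEconn
    have hsub : N ∪ E ⊆ Lᶜ :=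
      Set.union_subset (connectedComponentIn_subset _ _) (hEdef ▸ connectedComponentIn_subset _ _)
    have hxE' : x ∈ N ∪ E := Or.inr hxE
    rw [hEdef] at hxE' hsub hNE
    have h1 : N ∪ connectedComponentIn Lᶜ x ⊆ connectedComponentIn Lᶜ x :=
      hNE.subset_connectedComponentIn hxE' hsub
    have hzE : z ∈ E := by rw [hEdef]; exact h1 (Or.inl hzN)
    rw [hEo.frontier_eq] at hz
    exact hz.2 hzE
  have hfr : IsCompact (frontier E) :=
    hLcpt.of_isClosed_subset isClosed_frontier hfrL
  set E₀ : Set M := Υ '' E with hE₀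
  have hE₀o : IsOpen E₀ := hcov.isOpenMap E hEo
  have hE₀ne : E₀.Nonempty := ⟨Υ x, x, hxE, rfl⟩
  obtain ⟨y₀, hy₀⟩ := (Set.ne_univ_iff_exists_notMem _).1 hne
  -- the set of points with infinitely many E-preimages is empty
  have hfib : ∀ y : M, (E ∩ Υ ⁻¹' {y}).Finite := by
    have hloc : ∀ y : M, ∃ U : Set M, y ∈ U ∧ IsOpen U ∧
        ∀ y' ∈ U, ((E ∩ Υ ⁻¹' {y'}).Finite ↔ (E ∩ Υ ⁻¹' {y}).Finite) := by
      intro y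
      obtain ⟨d⟩ := exists_sheetData hcov hfr y isOpen_univ (mem_univ y)
      refine ⟨d.U3, d.mem3, d.open3, fun y' hy' => ?_⟩
      rw [d.finite_iff hEo (d.cl3sub (subset_closure hy')), d.finite_iff hEo d.mem2]
    set A : Set M := {y : M | ¬ (E ∩ Υ ⁻¹' {y}).Finite} with hA
    have hclopen : IsClopen A := by
      constructor
      · rw [← isOpen_compl_iff, isOpen_iff_mem_nhds]
        intro y hy
        obtain ⟨U, hyU, hUo, hU⟩ := hloc y
        refine Filter.mem_of_superset (hUo.mem_nhds hyU) (fun y' hy' => ?_)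
        exact fun hy'A => hy'A ((hU y' hy').2 (not_not.1 hy))
      · rw [isOpen_iff_mem_nhds]
        intro y hy
        obtain ⟨U, hyU, hUo, hU⟩ := hloc y
        refine Filter.mem_of_superset (hUo.mem_nhds hyU) (fun y' hy' => ?_)
        exact fun h => hy ((hU y' hy').1 h)
    rcases isClopen_iff.1 hclopen with h | h
    · intro y
      by_contra hy
      exact absurd (h ▸ hy : y ∈ (∅ : Set M)) (notMem_empty y)
    · exfalso
      have : y₀ ∈ A := h ▸ mem_univ y₀
      apply this
      have : E ∩ Υ ⁻¹' {y₀} = ∅ := by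
        ext z; simp only [Set.mem_inter_iff, Set.mem_preimage, Set.mem_singleton_iff,
          Set.mem_empty_iff_false, iff_false, not_and]
        intro hzE hzy
        exact hy₀ ⟨z, hzE, hzy⟩
      rw [this]; exact Set.finite_empty
  -- local properness everywhere
  have hprop : ∀ y : M, ∃ U : Set M, y ∈ U ∧ IsOpen U ∧
      IsCompact (closure E ∩ Υ ⁻¹' closure U) := by
    intro y
    obtain ⟨d⟩ := exists_sheetData hcov hfr y isOpen_univ (mem_univ y)
    refine ⟨d.U3, d.mem3, d.open3, ?_⟩
    exact d.isCompact_inter hcov.continuous hEo ((d.finite_iff hEo d.mem2).1 (hfib y))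
  -- conjunct 1
  have hconj1 : ∀ C : Set M, C ⊆ closure E₀ → IsCompact C →
      IsCompact (closure E ∩ Υ ⁻¹' C) := by
    intro C _ hCcpt
    choose U hU1 hU2 hU3 using hprop
    obtain ⟨s, hs⟩ := hCcpt.elim_finite_subcover U hU2 (fun y hy => mem_iUnion.2 ⟨y, hU1 y⟩)
    have hsub : closure E ∩ Υ ⁻¹' C ⊆ ⋃ y ∈ s, closure E ∩ Υ ⁻¹' closure (U y) := by
      rintro z ⟨hzE, hzC⟩
      obtain ⟨y, hys, hzy⟩ := mem_iUnion₂.1 (hs hzC)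
      exact mem_biUnion hys ⟨hzE, subset_closure hzy⟩
    refine IsCompact.of_isClosed_subset ?_
      (isClosed_closure.inter (hCcpt.isClosed.preimage hcov.continuous)) hsub
    exact s.finite_toSet.isCompact_biUnion (fun y _ => hU3 y)
  -- the compact set F = Υ '' frontier E
  set F : Set M := Υ '' frontier E with hF
  have hFcpt : IsCompact F := hfr.image hcov.continuous
  -- closure E₀ ⊆ E₀ ∪ F
  have hclsub : closure E₀ ⊆ E₀ ∪ F := by
    intro y hy
    by_contra hyn
    rw [Set.mem_union] at hyn
    push_neg at hyn
    obtain ⟨hyE₀, hyF⟩ := hyn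
    obtain ⟨d⟩ := exists_sheetData hcov hfr y hFcpt.isClosed.isOpen_compl hyF
    obtain ⟨p, hpU, hpE₀⟩ := mem_closure_iff.1 hy d.U3 d.open3 d.mem3
    obtain ⟨z, hzE, hzp⟩ := hpE₀
    have hzW : z ∈ Υ ⁻¹' d.U2 := by
      rw [Set.mem_preimage, hzp]; exact d.cl3sub (subset_closure hpU)
    rw [d.cover] at hzW
    obtain ⟨i, hi⟩ := mem_iUnion.1 hzW
    have hWfr : ¬ (d.W i ∩ frontier E).Nonempty := by
      rintro ⟨w, hwW, hwfr⟩
      have : Υ w ∈ d.U2 := by rw [← d.img i]; exact ⟨w, hwW, rfl⟩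
      exact d.sub2 this ⟨w, hwfr, rfl⟩
    have hWE : d.W i ⊆ E := d.sheet_subset hEo hWfr ⟨z, hi, subset_closure hzE⟩
    apply hyE₀
    have : y ∈ d.U2 := d.mem2
    rw [← d.img i] at this
    obtain ⟨w, hwW, hwy⟩ := this
    exact ⟨w, hWE hwW, hwy⟩
  -- conjunct 2
  have hconj2 : Υ '' closure E = closure E₀ := by
    apply Set.Subset.antisymm
    · exact image_closure_subset_closure_image hcov.continuous
    · intro y hy
      rcases hclsub hy with h | h
      · obtain ⟨z, hz, rfl⟩ := h; exact ⟨z, subset_closure hz, rfl⟩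
      · obtain ⟨z, hz, rfl⟩ := h; exact ⟨z, frontier_subset_closure hz, rfl⟩
  -- conjunct 3
  have hconj3 : frontier E₀ = F \ E₀ := by
    apply Set.Subset.antisymm
    · intro y hy
      rw [hE₀o.frontier_eq] at hy
      rcases hclsub hy.1 with h | h
      · exact absurd h hy.2
      · exact ⟨h, hy.2⟩
    · rintro y ⟨hyF, hyE₀⟩
      rw [hE₀o.frontier_eq]
      refine ⟨?_, hyE₀⟩
      rw [← hconj2]
      obtain ⟨z, hz, rfl⟩ := hyF
      exact ⟨z, frontier_subset_closure hz, rfl⟩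
  -- conjunct 4
  have hconj4 : IsCompact (frontier E₀) := by
    apply hFcpt.of_isClosed_subset isClosed_frontier
    rw [hconj3]; exact Set.diff_subset
  -- noncompactness of closure E₀
  have hnc : ¬ IsCompact (closure E₀) := by
    intro h
    apply hEnc
    have hsub : closure E ⊆ Υ ⁻¹' closure E₀ := by
      intro z hz
      rw [Set.mem_preimage, ← hconj2]
      exact ⟨z, hz, rfl⟩
    have := hconj1 (closure E₀) subset_rfl h
    rwa [Set.inter_eq_self_of_subset_left hsub] at this
  refine ⟨hconj1, hconj2, by rw [hconj3], hconj4, frontier E₀, hconj4, ⟨Υ x, ?_, ?_⟩, hnc⟩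
  · -- Υ x ∈ (frontier E₀)ᶜ
    intro hmem
    rw [hE₀o.frontier_eq] at hmem
    exact hmem.2 ⟨x, hxE, rfl⟩
  · -- E₀ = connectedComponentIn (frontier E₀)ᶜ (Υ x)
    have hE₀conn : IsPreconnected E₀ := hEconn.image Υ hcov.continuous.continuousOn
    have hyE₀ : Υ x ∈ E₀ := ⟨x, hxE, rfl⟩
    have hE₀sub : E₀ ⊆ (frontier E₀)ᶜ := by
      intro p hp hpfr
      rw [hE₀o.frontier_eq] at hpfr
      exact hpfr.2 hp
    apply Set.Subset.antisymm
    · exact hE₀conn.subset_connectedComponentIn hyE₀ hE₀sub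
    · have hcsub : connectedComponentIn (frontier E₀)ᶜ (Υ x) ⊆ E₀ ∪ (closure E₀)ᶜ := by
        intro p hp
        have hpfr : p ∉ frontier E₀ := connectedComponentIn_subset _ _ hp
        by_cases hcl : p ∈ closure E₀
        · left
          by_contra hpE₀
          exact hpfr (by rw [hE₀o.frontier_eq]; exact ⟨hcl, hpE₀⟩)
        · exact Or.inr hcl
      apply isPreconnected_connectedComponentIn.subset_left_of_subset_union hE₀o
        isClosed_closure.isOpen_compl (disjoint_compl_right.mono_left subset_closure) hcsub
      exact ⟨Υ x, mem_connectedComponentIn (by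
        intro hmem
        rw [hE₀o.frontier_eq] at hmem
        exact hmem.2 hyE₀), hyE₀⟩
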